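/- Let Υ(z) = az + b and Φ(z) = μz with a, b, μ ∈ ℂ, |μ| ≤ 1, and suppose the weighted composition operator C_{Υ,Φ} f = Υ · (f ∘ Φ) is bounded on H_E(ξ), where ξ_n = √(n!). Then C_{Υ,Φ} is an isometry on H_E(ξ) if and only if |μ| = 1, a = 0, and |b| = 1; and the same equivalence holds for unitarity. -/

import Mathlib

noncomputable section

open Filter

/-- `n`-th Taylor coefficient of `f` at `0`. -/
def heCoeff (f : ℂ → ℂ) (n : ℕ) : ℂ := iteratedDeriv n f 0 / (n.factorial : ℂ)

/-- Membership in the weighted Hardy space of entire functions `H_E(ξ)`. -/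
def MemHE (ξ : ℕ → ℝ) (f : ℂ → ℂ) : Prop :=
  Differentiable ℂ f ∧ Summable (fun n => ‖heCoeff f n‖ ^ 2 * (ξ n) ^ 2)

/-- Squared norm in `H_E(ξ)`. -/
def heNormSq (ξ : ℕ → ℝ) (f : ℂ → ℂ) : ℝ := ∑' n, ‖heCoeff f n‖ ^ 2 * (ξ n) ^ 2

/-- Inner product in `H_E(ξ)`. -/
def heInner (ξ : ℕ → ℝ) (f g : ℂ → ℂ) : ℂ :=
  ∑' n, heCoeff f n * (starRingEnd ℂ) (heCoeff g n) * ((ξ n : ℂ)) ^ 2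

/-- `ξ` is an admissible weight sequence: positive with `ξ n ^ (1/n) → ∞`. -/
def HEWeight (ξ : ℕ → ℝ) : Prop :=
  (∀ n, 0 < ξ n) ∧ Tendsto (fun n : ℕ => (ξ n) ^ ((1 : ℝ) / n)) atTop atTop

/-- An operator on functions is an isometry of `H_E(ξ)`. -/
def IsIsometryHE (ξ : ℕ → ℝ) (T : (ℂ → ℂ) → (ℂ → ℂ)) : Prop :=
  (∀ f, MemHE ξ f → MemHE ξ (T f)) ∧ ∀ f, MemHE ξ f → heNormSq ξ (T f) = heNormSq ξ f

/-- Unitary: an isometry of `H_E(ξ)` mapping `H_E(ξ)` onto itself. -/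
def IsUnitaryHE (ξ : ℕ → ℝ) (T : (ℂ → ℂ) → (ℂ → ℂ)) : Prop :=
  IsIsometryHE ξ T ∧ ∀ g, MemHE ξ g → ∃ f, MemHE ξ f ∧ T f = g

/-- Composition operator `C_Φ f = f ∘ Φ`. -/
def compOp (Φ : ℂ → ℂ) : (ℂ → ℂ) → (ℂ → ℂ) := fun f => f ∘ Φ

/-- Weighted composition operator `C_{Υ,Φ} f = Υ · (f ∘ Φ)`. -/
def wCompOp (Υ Φ : ℂ → ℂ) : (ℂ → ℂ) → (ℂ → ℂ) := fun f z => Υ z * f (Φ z)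

/-- Reproducing kernel `K_p(z) = ∑ conj(p)^n z^n / ξ_n²`. -/
def heKernel (ξ : ℕ → ℝ) (p : ℂ) : ℂ → ℂ :=
  fun z => ∑' n, (starRingEnd ℂ p) ^ n * z ^ n / ((ξ n : ℂ)) ^ 2

/-- Boundedness of an operator on `H_E(ξ)`. -/
def IsBoundedHE (ξ : ℕ → ℝ) (T : (ℂ → ℂ) → (ℂ → ℂ)) : Prop :=
  ∃ M > (0 : ℝ), ∀ f, MemHE ξ f → MemHE ξ (T f) ∧
    Real.sqrt (heNormSq ξ (T f)) ≤ M * Real.sqrt (heNormSq ξ f)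

/-- Generalized weighted composition operator `D^p_{Φ,Υ} f = Υ · (f^{(p)} ∘ Φ)`. -/
def genWComp (p : ℕ) (Φ Υ : ℂ → ℂ) : (ℂ → ℂ) → (ℂ → ℂ) :=
  fun f z => Υ z * iteratedDeriv p f (Φ z)

open Polynomial in
lemma iteratedDeriv_polyEval (p : Polynomial ℂ) (n : ℕ) (x : ℂ) :
    iteratedDeriv n (fun z => p.eval z) x = (derivative^[n] p).eval x := by
  induction n generalizing p with
  | zero => simp
  | succ n ih =>
    rw [iteratedDeriv_succ']
    have h : deriv (fun z => p.eval z) = fun z => (derivative p).eval z :=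
      funext fun z => p.deriv
    rw [h, ih, Function.iterate_succ_apply]

lemma heCoeff_poly (p : Polynomial ℂ) (n : ℕ) :
    heCoeff (fun z => p.eval z) n = p.coeff n := by
  unfold heCoeff
  rw [iteratedDeriv_polyEval, ← Polynomial.coeff_zero_eq_eval_zero,
    Polynomial.coeff_iterate_derivative]
  simp only [Nat.zero_add, Nat.descFactorial_self, nsmul_eq_mul]
  rw [mul_comm, mul_div_assoc, div_self (Nat.cast_ne_zero.mpr n.factorial_ne_zero), mul_one]

lemma memHE_poly (ξ : ℕ → ℝ) (p : Polynomial ℂ) : MemHE ξ (fun z => p.eval z) := by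
  refine ⟨p.differentiable, ?_⟩
  apply summable_of_ne_finset_zero (s := Finset.range (p.natDegree + 1))
  intro n hn
  have : p.coeff n = 0 := p.coeff_eq_zero_of_natDegree_lt (by
    simpa using Finset.mem_range.not.mp hn)
  simp [heCoeff_poly, this]

lemma heNormSq_poly (ξ : ℕ → ℝ) (p : Polynomial ℂ) (N : ℕ) (hN : p.natDegree < N) :
    heNormSq ξ (fun z => p.eval z) = ∑ n ∈ Finset.range N, ‖p.coeff n‖ ^ 2 * (ξ n) ^ 2 := by
  unfold heNormSq
  rw [tsum_eq_sum (s := Finset.range N) ?h]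
  · exact Finset.sum_congr rfl fun n _ => by rw [heCoeff_poly]
  case h =>
    intro n hn
    have : p.coeff n = 0 := p.coeff_eq_zero_of_natDegree_lt
      (lt_of_lt_of_le hN (by simpa using Finset.mem_range.not.mp hn))
    simp [heCoeff_poly, this]

lemma heCoeff_wc (c m : ℂ) {f : ℂ → ℂ} (hf : Differentiable ℂ f) (n : ℕ) :
    heCoeff (fun z => c * f (m * z)) n = c * m ^ n * heCoeff f n := by
  unfold heCoeff
  have hg : Differentiable ℂ (fun z => f (m * z)) :=
    hf.comp (differentiable_id.const_mul m)
  have e1 : iteratedDeriv n (fun z => c * f (m * z)) 0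
      = c * iteratedDeriv n (fun z => f (m * z)) 0 := by
    simp only [← iteratedDerivWithin_univ]
    exact iteratedDerivWithin_const_mul (Set.mem_univ 0) uniqueDiffOn_univ c
      hg.contDiff.contDiffWithinAt
  have e2 : iteratedDeriv n (fun z => f (m * z)) 0 = m ^ n * iteratedDeriv n f 0 := by
    have := congrFun (iteratedDeriv_comp_const_mul (n := n) hf.contDiff m) 0
    simpa using this
  rw [e1, e2]; ring

/-- If `‖c‖ = 1` and `‖m‖ = 1` then `f ↦ c • (f ∘ (m • ·))` preserves `H_E(ξ)` and its norm. -/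
lemma wc_isometric (ξ : ℕ → ℝ) (c m : ℂ) (hc : ‖c‖ = 1) (hm : ‖m‖ = 1)
    {f : ℂ → ℂ} (hf : MemHE ξ f) :
    MemHE ξ (fun z => c * f (m * z)) ∧
      heNormSq ξ (fun z => c * f (m * z)) = heNormSq ξ f := by
  have key : ∀ n, ‖heCoeff (fun z => c * f (m * z)) n‖ ^ 2 * (ξ n) ^ 2
      = ‖heCoeff f n‖ ^ 2 * (ξ n) ^ 2 := by
    intro n
    rw [heCoeff_wc c m hf.1 n]
    simp [norm_mul, norm_pow, hc, hm]
  refine ⟨⟨?_, ?_⟩, ?_⟩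
  · exact (hf.1.comp (differentiable_id.const_mul m)).const_mul c
  · exact hf.2.congr fun n => (key n).symm
  · exact tsum_congr key

theorem stmt11 (ξ : ℕ → ℝ) (hξ : ξ = fun n => Real.sqrt (n.factorial))
    (a b μ : ℂ) (hμ : ‖μ‖ ≤ 1)
    (Υ Φ : ℂ → ℂ) (hΥ : Υ = fun z => a * z + b) (hΦ : Φ = fun z => μ * z)
    (hbd : IsBoundedHE ξ (wCompOp Υ Φ)) :
    (IsIsometryHE ξ (wCompOp Υ Φ) ↔ (‖μ‖ = 1 ∧ a = 0 ∧ ‖b‖ = 1)) ∧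
    (IsUnitaryHE ξ (wCompOp Υ Φ) ↔ (‖μ‖ = 1 ∧ a = 0 ∧ ‖b‖ = 1)) := by
  subst hΥ hΦ
  have hξ2 : ∀ n : ℕ, (ξ n) ^ 2 = (n.factorial : ℝ) := by
    intro n; rw [hξ]; exact Real.sq_sqrt (by positivity)
  -- Backward direction: the conditions imply isometry.
  have hback : (‖μ‖ = 1 ∧ a = 0 ∧ ‖b‖ = 1) →
      IsIsometryHE ξ (wCompOp (fun z => a * z + b) (fun z => μ * z)) := by
    rintro ⟨hμ1, ha, hb1⟩
    subst ha
    have hT : ∀ f : ℂ → ℂ, wCompOp (fun z => (0:ℂ) * z + b) (fun z => μ * z) f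
        = fun z => b * f (μ * z) := by
      intro f; funext z; simp [wCompOp]
    constructor
    · intro f hf; rw [hT]; exact (wc_isometric ξ b μ hb1 hμ1 hf).1
    · intro f hf; rw [hT]; exact (wc_isometric ξ b μ hb1 hμ1 hf).2
  -- Surjectivity under the conditions.
  have hsurj : (‖μ‖ = 1 ∧ a = 0 ∧ ‖b‖ = 1) →
      ∀ g, MemHE ξ g → ∃ f, MemHE ξ f ∧
        wCompOp (fun z => a * z + b) (fun z => μ * z) f = g := by
    rintro ⟨hμ1, ha, hb1⟩ g hg
    subst ha
    have hbne : b ≠ 0 := by intro h; rw [h] at hb1; simp at hb1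
    have hμne : μ ≠ 0 := by intro h; rw [h] at hμ1; simp at hμ1
    refine ⟨fun z => b⁻¹ * g (μ⁻¹ * z), ?_, ?_⟩
    · exact (wc_isometric ξ b⁻¹ μ⁻¹ (by simp [hb1]) (by simp [hμ1]) hg).1
    · funext z
      simp only [wCompOp]
      rw [← mul_assoc, ← mul_assoc]
      field_simp
      ring
  -- Forward direction.
  have hfwd : IsIsometryHE ξ (wCompOp (fun z => a * z + b) (fun z => μ * z)) →
      (‖μ‖ = 1 ∧ a = 0 ∧ ‖b‖ = 1) := by
    intro hiso
    -- Test on 1, X, X².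
    have t1 : wCompOp (fun z => a * z + b) (fun z => μ * z)
        (fun z => (1 : Polynomial ℂ).eval z)
        = fun z => (Polynomial.C a * Polynomial.X + Polynomial.C b).eval z := by
      funext z; simp [wCompOp]
    have t2 : wCompOp (fun z => a * z + b) (fun z => μ * z)
        (fun z => (Polynomial.X : Polynomial ℂ).eval z)
        = fun z => (Polynomial.C (a*μ) * Polynomial.X ^ 2
            + Polynomial.C (b*μ) * Polynomial.X).eval z := by
      funext z; simp [wCompOp]; ring
    have t3 : wCompOp (fun z => a * z + b) (fun z => μ * z)
        (fun z => (Polynomial.X ^ 2 : Polynomial ℂ).eval z)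
        = fun z => (Polynomial.C (a*μ^2) * Polynomial.X ^ 3
            + Polynomial.C (b*μ^2) * Polynomial.X ^ 2).eval z := by
      funext z; simp [wCompOp]; ring
    have e1 := hiso.2 _ (memHE_poly ξ 1)
    have e2 := hiso.2 _ (memHE_poly ξ Polynomial.X)
    have e3 := hiso.2 _ (memHE_poly ξ (Polynomial.X ^ 2))
    rw [t1] at e1; rw [t2] at e2; rw [t3] at e3
    rw [heNormSq_poly ξ _ 2 (Nat.lt_succ_of_le (by compute_degree!)), heNormSq_poly ξ _ 2 (Nat.lt_succ_of_le (by compute_degree!))] at e1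
    rw [heNormSq_poly ξ _ 3 (Nat.lt_succ_of_le (by compute_degree!)), heNormSq_poly ξ _ 3 (Nat.lt_succ_of_le (by compute_degree!))] at e2
    rw [heNormSq_poly ξ _ 4 (Nat.lt_succ_of_le (by compute_degree!)), heNormSq_poly ξ _ 4 (Nat.lt_succ_of_le (by compute_degree!))] at e3
    simp only [Finset.sum_range_succ, Finset.sum_range_zero, hξ2,
      Polynomial.coeff_add, Polynomial.coeff_C_mul, Polynomial.coeff_X_pow,
      Polynomial.coeff_X, Polynomial.coeff_C, Polynomial.coeff_one] at e1 e2 e3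
    norm_num [norm_mul, norm_pow, Nat.factorial] at e1 e2 e3
    have hA : (0:ℝ) ≤ ‖a‖ := norm_nonneg a
    have hB : (0:ℝ) ≤ ‖b‖ := norm_nonneg b
    have hM : (0:ℝ) ≤ ‖μ‖ := norm_nonneg μ
    have hMne : ‖μ‖ ≠ 0 := by
      intro h; rw [h] at e2; norm_num at e2
    have hA4 : ‖a‖ ^ 4 * ‖μ‖ ^ 4 = 0 := by
      linear_combination (‖b‖^2*‖μ‖^2 + 2*‖a‖^2*‖μ‖^2 + 1) * e2 - (1/2 : ℝ) * e3
        - ‖μ‖^4*(‖b‖^2 + 3*‖a‖^2) * e1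
    have ha0 : ‖a‖ = 0 := by
      rcases mul_eq_zero.mp hA4 with h | h
      · exact pow_eq_zero_iff (by norm_num) |>.mp h
      · exact absurd (pow_eq_zero_iff (by norm_num) |>.mp h) hMne
    rw [ha0] at e1 e2
    have hM1 : ‖μ‖ = 1 := by nlinarith [sq_nonneg (‖μ‖ - 1)]
    refine ⟨hM1, norm_eq_zero.mp ha0, ?_⟩
    nlinarith [sq_nonneg (‖b‖ - 1)]
  refine ⟨⟨hfwd, hback⟩, ⟨fun h => hfwd h.1, fun h => ⟨hback h, hsurj h⟩⟩⟩
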